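/- arXiv:2407.15388 — 2 statements merged into one kernel-verified Lean document; each statement's English description precedes it below -/
import Mathlib

section
/- Let μ be the product of the exponential distribution of rate 1 (density e^{−v} on [0,∞)) and the Gamma distribution with shape α > 0 and rate φ > 0 (density φ^α z^{α−1} e^{−zφ}/Γ(α) on (0,∞)). Then for every M ≥ 0, μ({(v,z) : v > z·M}) = (1 + M/φ)^{−α}. Hence the vitality model with initial vitality V(0) ~ Exp(1) independent of a Gamma-distributed depletion multiplier Z, and trend dY(t) = Z·μ_x(t)dt, has T-year survival probability (1 + (∫₀^T μ_x(t)dt)/φ)^{−α}, matching the Gamma-Gompertz model. -/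
open MeasureTheory Set ProbabilityTheory intervalIntegral
open scoped ENNReal

open Real in
lemma expMeasure_one_Ioi (x : ℝ) :
    expMeasure 1 (Set.Ioi x) = ENNReal.ofReal (Real.exp (-(max x 0))) := by
  have hprob : IsProbabilityMeasure (expMeasure 1) :=
    isProbabilityMeasure_expMeasure one_pos
  have hIic : expMeasure 1 (Set.Iic x)
      = ENNReal.ofReal (if 0 ≤ x then 1 - Real.exp (-(1 * x)) else 0) := by
    have : expMeasure 1 (Set.Iic x) = ∫⁻ y in Set.Iic x, exponentialPDF 1 y := by
      rw [expMeasure, gammaMeasure, withDensity_apply _ measurableSet_Iic]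
      rfl
    rw [this, lintegral_exponentialPDF_eq_antiDeriv one_pos]
  have hcompl : expMeasure 1 (Set.Ioi x) = 1 - expMeasure 1 (Set.Iic x) := by
    rw [← Set.compl_Iic, measure_compl measurableSet_Iic (measure_ne_top _ _),
      measure_univ]
  rw [hcompl, hIic]
  rcases le_or_gt 0 x with hx | hx
  · rw [if_pos hx, max_eq_left hx, one_mul]
    rw [← ENNReal.ofReal_one, ← ENNReal.ofReal_sub _
      (sub_nonneg.mpr (Real.exp_le_one_iff.mpr (by linarith)))]
    norm_num
  · rw [if_neg (not_le.mpr hx), max_eq_right hx.le]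
    simp

/-- Vitality model with `V(0) ~ Exp(1)` independent of a Gamma(α, φ)-distributed
depletion multiplier `Z` and trend `dY(t) = Z·μₓ(t) dt`: under the product measure
of `Exp(1)` and `Gamma(α, φ)`, the probability of `{(v, z) : v > z·M}` equals
`(1 + M/φ)^{-α}` for every `M ≥ 0`; hence the `T`-year survival probability, with
`M = ∫₀^T μₓ t dt`, is `(1 + (∫₀^T μₓ t dt)/φ)^{-α}`, matching the
Gamma-Gompertz model. -/
theorem exp_gamma_vitality_survival
    (α φ : ℝ) (hα : 0 < α) (hφ : 0 < φ) :
    (∀ M : ℝ, 0 ≤ M →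
      ((expMeasure 1).prod (gammaMeasure α φ)) {p : ℝ × ℝ | p.2 * M < p.1}
        = ENNReal.ofReal ((1 + M / φ) ^ (-α))) ∧
    ∀ (T : ℝ) (μx : ℝ → ℝ), 0 ≤ T → (∀ t ∈ Set.Icc 0 T, 0 ≤ μx t) →
      IntervalIntegrable μx volume 0 T →
      ((expMeasure 1).prod (gammaMeasure α φ))
          {p : ℝ × ℝ | p.2 * ∫ t in (0:ℝ)..T, μx t < p.1}
        = ENNReal.ofReal ((1 + (∫ t in (0:ℝ)..T, μx t) / φ) ^ (-α)) := by
  have main : ∀ M : ℝ, 0 ≤ M →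
      ((expMeasure 1).prod (gammaMeasure α φ)) {p : ℝ × ℝ | p.2 * M < p.1}
        = ENNReal.ofReal ((1 + M / φ) ^ (-α)) := by
    intro M hM
    have hprobG : IsProbabilityMeasure (gammaMeasure α φ) :=
      isProbabilityMeasure_gammaMeasure hα hφ
    have hprobE : IsProbabilityMeasure (expMeasure 1) :=
      isProbabilityMeasure_expMeasure one_pos
    have hs : MeasurableSet {p : ℝ × ℝ | p.2 * M < p.1} :=
      measurableSet_lt (measurable_snd.mul_const M) measurable_fst
    have hφM : 0 < φ + M := by linarith
    rw [Measure.prod_apply_symm hs]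
    have h1 : ∀ z : ℝ, expMeasure 1 ((fun v => (v, z)) ⁻¹' {p : ℝ × ℝ | p.2 * M < p.1})
        = ENNReal.ofReal (Real.exp (-(max (z * M) 0))) := by
      intro z
      have : (fun v => (v, z)) ⁻¹' {p : ℝ × ℝ | p.2 * M < p.1} = Set.Ioi (z * M) := rfl
      rw [this, expMeasure_one_Ioi]
    simp_rw [h1]
    have hf : Measurable (gammaPDF α φ) := (measurable_gammaPDFReal α φ).ennreal_ofReal
    have hg : Measurable fun z : ℝ => ENNReal.ofReal (Real.exp (-(max (z * M) 0))) :=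
      (((measurable_id.mul_const M).max measurable_const).neg.exp).ennreal_ofReal
    rw [gammaMeasure, lintegral_withDensity_eq_lintegral_mul _ hf hg]
    have key : ∀ z : ℝ, gammaPDF α φ z * ENNReal.ofReal (Real.exp (-(max (z * M) 0)))
        = ENNReal.ofReal ((φ / (φ + M)) ^ α) * gammaPDF α (φ + M) z := by
      intro z
      rcases lt_or_ge z 0 with hz | hz
      · rw [gammaPDF_of_neg hz, gammaPDF_of_neg hz, zero_mul, mul_zero]
      · have hzM : 0 ≤ z * M := mul_nonneg hz hM
        rw [gammaPDF_of_nonneg hz, gammaPDF_of_nonneg hz, max_eq_left hzM,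
          ← ENNReal.ofReal_mul (by positivity), ← ENNReal.ofReal_mul (by positivity)]
        congr 1
        have hΓ : 0 < Real.Gamma α := Real.Gamma_pos_of_pos hα
        have hpow : φ ^ α = (φ / (φ + M)) ^ α * (φ + M) ^ α := by
          rw [← Real.mul_rpow (by positivity) hφM.le, div_mul_cancel₀ _ hφM.ne']
        have hexp : Real.exp (-(φ * z)) * Real.exp (-(z * M))
            = Real.exp (-((φ + M) * z)) := by
          rw [← Real.exp_add]; ring_nf
        calc φ ^ α / Real.Gamma α * z ^ (α - 1) * Real.exp (-(φ * z))
              * Real.exp (-(z * M))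
            = (φ ^ α) * (z ^ (α - 1) * (Real.exp (-(φ * z)) * Real.exp (-(z * M))))
              / Real.Gamma α := by ring
          _ = (φ / (φ + M)) ^ α
              * ((φ + M) ^ α / Real.Gamma α * z ^ (α - 1) * Real.exp (-((φ + M) * z))) := by
              rw [hexp, hpow]; ring
    simp only [Pi.mul_apply]
    simp_rw [key]
    rw [lintegral_const_mul _ (by
      exact (measurable_gammaPDFReal α (φ + M)).ennreal_ofReal),
      lintegral_gammaPDF_eq_one hα hφM, mul_one]
    congr 1
    rw [Real.rpow_neg (by positivity), ← Real.inv_rpow (by positivity)]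
    congr 1
    rw [inv_eq_one_div]
    field_simp
  refine ⟨main, fun T μx hT hμx hint => ?_⟩
  have hM : 0 ≤ ∫ t in (0:ℝ)..T, μx t :=
    intervalIntegral.integral_nonneg hT (fun t ht => hμx t (by simpa using ht))
  exact main _ hM
end

section
/- Let n ≥ 1 be an integer, σ > 0, δ ∈ ℝ, λ > 0, q > 0, let p₁, …, p_n > 0 with Σ_{i=1}^n p_i = 1, and let 0 < α₁ < α₂ < … < α_n. Define h(y) = (1/2)σ²y² − δy + Σ_{i=1}^n λ p_i α_i/(y + α_i) − λ − q on ℝ ∖ {−α₁, …, −α_n}. Then h has exactly n + 2 real zeros θ_{n+2} < θ_{n+1} < … < θ₂ < 0 < θ₁: exactly one zero in (0, ∞), exactly one in (−α₁, 0), exactly one in each interval (−α_{i+1}, −α_i) for i = 1, …, n−1, and exactly one in (−∞, −α_n). -/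
open Real Set Polynomial


lemma ivt_sign' {f : ℝ → ℝ} (hf : Continuous f) {a b : ℝ} (hab : a < b)
    (hs : f a * f b < 0) : ∃ x ∈ Set.Ioo a b, f x = 0 := by
  rcases lt_trichotomy (f a) 0 with hfa | hfa | hfa
  · have hfb : 0 < f b := by nlinarith
    obtain ⟨x, hx, hx0⟩ := intermediate_value_Ioo hab.le hf.continuousOn ⟨hfa, hfb⟩
    exact ⟨x, hx, hx0⟩
  · rw [hfa, zero_mul] at hs; exact absurd hs (lt_irrefl 0)
  · have hfb : f b < 0 := by nlinarith
    obtain ⟨x, hx, hx0⟩ := intermediate_value_Ioo' hab.le hf.continuousOn ⟨hfb, hfa⟩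
    exact ⟨x, hx, hx0⟩

lemma prod_neg_sign' {s : Finset ℕ} {f : ℕ → ℝ} (hf : ∀ i ∈ s, f i < 0) :
    0 < (-1 : ℝ) ^ s.card * ∏ i ∈ s, f i := by
  have h1 : ∏ i ∈ s, f i = (-1 : ℝ) ^ s.card * ∏ i ∈ s, (-(f i)) := by
    rw [← Finset.prod_const, ← Finset.prod_mul_distrib]
    simp
  have hpos : 0 < ∏ i ∈ s, (-(f i)) :=
    Finset.prod_pos fun i hi => by linarith [hf i hi]
  have hsq : ((-1 : ℝ) ^ s.card) ^ 2 = 1 := by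
    rw [← pow_mul, mul_comm, pow_mul]; norm_num
  rw [h1, ← mul_assoc, ← sq, hsq, one_mul]
  exact hpos

lemma neg_one_pow_sq' (i : ℕ) : ((-1 : ℝ) ^ i) ^ 2 = 1 := by
  rw [← pow_mul, mul_comm, pow_mul]; norm_num

set_option maxHeartbeats 2000000

/-- Roots of the Cramér–Lundberg-type equation for the spectrally negative Lévy
vitality model with mixed-exponential jumps: for `σ > 0`, `λ > 0`, `q > 0`,
weights `p₁,…,p_n > 0` summing to 1 (indexed `0,…,n-1`) and distinct rates
`0 < α₁ < … < α_n`, the function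
`h y = σ²y²/2 - δy + ∑ᵢ λ pᵢ αᵢ/(y + αᵢ) - λ - q`
has exactly `n + 2` real zeros: exactly one in `(0,∞)`, one in `(-α₁, 0)`, one in
each `(-α_{i+1}, -α_i)` for `i = 1,…,n-1`, and one in `(-∞, -α_n)` (so that the
zeros satisfy `θ_{n+2} < … < θ₂ < 0 < θ₁`), and every zero of `h` lies in one of
these intervals. -/
theorem cramer_lundberg_roots
    (n : ℕ) (hn : 1 ≤ n) (σ δ lam q : ℝ)
    (hσ : 0 < σ) (hlam : 0 < lam) (hq : 0 < q)
    (p α : ℕ → ℝ)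
    (hp : ∀ i < n, 0 < p i) (hpsum : ∑ i ∈ Finset.range n, p i = 1)
    (hαpos : ∀ i < n, 0 < α i)
    (hαmono : ∀ i j, i < j → j < n → α i < α j)
    (h : ℝ → ℝ)
    (hdef : ∀ y, h y =
      1 / 2 * σ ^ 2 * y ^ 2 - δ * y +
        (∑ i ∈ Finset.range n, lam * p i * α i / (y + α i)) - lam - q) :
    (∃! y, y ∈ Set.Ioi (0:ℝ) ∧ h y = 0) ∧
    (∃! y, y ∈ Set.Ioo (-(α 0)) (0:ℝ) ∧ h y = 0) ∧
    (∀ i : ℕ, i + 1 < n →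
      ∃! y, y ∈ Set.Ioo (-(α (i + 1))) (-(α i)) ∧ h y = 0) ∧
    (∃! y, y ∈ Set.Iio (-(α (n - 1))) ∧ h y = 0) ∧
    (∀ y : ℝ, (∀ i < n, y ≠ -(α i)) → h y = 0 →
      y ∈ Set.Ioi (0:ℝ) ∨ y ∈ Set.Ioo (-(α 0)) (0:ℝ) ∨
        (∃ i : ℕ, i + 1 < n ∧ y ∈ Set.Ioo (-(α (i + 1))) (-(α i))) ∨
        y ∈ Set.Iio (-(α (n - 1)))) := by
  have hαmono' : ∀ i j, i ≤ j → j < n → α i ≤ α j := by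
    intro i j hij hj
    rcases eq_or_lt_of_le hij with rfl | hlt
    · exact le_refl _
    · exact (hαmono i j hlt hj).le
  set P : Polynomial ℝ :=
    (C (σ ^ 2 / 2) * X ^ 2 - C δ * X - C (lam + q)) *
        ∏ j ∈ Finset.range n, (X + C (α j)) +
      ∑ i ∈ Finset.range n,
        C (lam * p i * α i) * ∏ j ∈ (Finset.range n).erase i, (X + C (α j))
    with hPdef
  -- evaluation formula
  have hPeval : ∀ y : ℝ, P.eval y =
      (σ ^ 2 / 2 * y ^ 2 - δ * y - (lam + q)) *
          ∏ j ∈ Finset.range n, (y + α j) +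
        ∑ i ∈ Finset.range n,
          lam * p i * α i * ∏ j ∈ (Finset.range n).erase i, (y + α j) := by
    intro y
    simp [hPdef, eval_prod, eval_finset_sum]
  -- relation with h
  have hPh : ∀ y : ℝ, (∀ j < n, y + α j ≠ 0) →
      P.eval y = h y * ∏ j ∈ Finset.range n, (y + α j) := by
    intro y hy
    have hterm : ∀ i ∈ Finset.range n,
        lam * p i * α i / (y + α i) * ∏ j ∈ Finset.range n, (y + α j) =
          lam * p i * α i * ∏ j ∈ (Finset.range n).erase i, (y + α j) := by
      intro i hi
      rw [← Finset.prod_erase_mul _ _ hi]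
      have hne := hy i (Finset.mem_range.mp hi)
      field_simp
    have hexp : h y * ∏ j ∈ Finset.range n, (y + α j) =
        (σ ^ 2 / 2 * y ^ 2 - δ * y - (lam + q)) *
            ∏ j ∈ Finset.range n, (y + α j) +
          (∑ i ∈ Finset.range n, lam * p i * α i / (y + α i)) *
            ∏ j ∈ Finset.range n, (y + α j) := by
      rw [hdef]; ring
    rw [hPeval, hexp, Finset.sum_mul, Finset.sum_congr rfl hterm]
  -- eval at -(α i)
  have hPα : ∀ i < n, P.eval (-(α i)) =
      lam * p i * α i * ∏ j ∈ (Finset.range n).erase i, (α j - α i) := by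
    intro i hi
    have hiR : i ∈ Finset.range n := Finset.mem_range.mpr hi
    rw [hPeval]
    have h1 : ∏ j ∈ Finset.range n, ((-(α i)) + α j) = 0 :=
      Finset.prod_eq_zero hiR (by ring)
    rw [h1, mul_zero, zero_add]
    rw [Finset.sum_eq_single i]
    · congr 1
      exact Finset.prod_congr rfl fun j _ => by ring
    · intro k hk hki
      have hik : i ∈ (Finset.range n).erase k :=
        Finset.mem_erase.mpr ⟨fun hh => hki hh.symm, hiR⟩
      rw [Finset.prod_eq_zero hik (by ring), mul_zero]
    · intro hcon; exact absurd hiR hcon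
  -- sign at -(α i)
  have hsign : ∀ i < n, 0 < (-1 : ℝ) ^ i * P.eval (-(α i)) := by
    intro i hi
    rw [hPα i hi]
    have hsplit : (Finset.range n).erase i = Finset.range i ∪ Finset.Ioo i n := by
      ext j
      simp only [Finset.mem_erase, Finset.mem_range, Finset.mem_union, Finset.mem_Ioo]
      omega
    have hdisj : Disjoint (Finset.range i) (Finset.Ioo i n) := by
      rw [Finset.disjoint_left]
      intro j hj hj'
      simp only [Finset.mem_range] at hj
      simp only [Finset.mem_Ioo] at hj'
      omega
    rw [hsplit, Finset.prod_union hdisj]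
    have hA : 0 < (-1 : ℝ) ^ i * ∏ j ∈ Finset.range i, (α j - α i) := by
      have := prod_neg_sign' (s := Finset.range i) (f := fun j => α j - α i)
        (fun j hj => by
          have hj' := Finset.mem_range.mp hj
          have := hαmono j i hj' hi
          show α j - α i < 0
          linarith)
      simpa using this
    have hB : 0 < ∏ j ∈ Finset.Ioo i n, (α j - α i) := by
      apply Finset.prod_pos
      intro j hj
      have hj' := Finset.mem_Ioo.mp hj
      have := hαmono i j hj'.1 hj'.2
      linarith
    have hc : 0 < lam * p i * α i :=
      mul_pos (mul_pos hlam (hp i hi)) (hαpos i hi)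
    have heq : (-1 : ℝ) ^ i * (lam * p i * α i *
        ((∏ j ∈ Finset.range i, (α j - α i)) * ∏ j ∈ Finset.Ioo i n, (α j - α i))) =
        ((-1 : ℝ) ^ i * ∏ j ∈ Finset.range i, (α j - α i)) * (lam * p i * α i) *
          ∏ j ∈ Finset.Ioo i n, (α j - α i) := by ring
    rw [heq]
    exact mul_pos (mul_pos hA hc) hB
  -- P is nonzero
  have hPne : P ≠ 0 := by
    intro h0
    have := hsign 0 hn
    rw [h0] at this
    simp at this
  -- degree bound
  have hdeg : P.natDegree ≤ n + 2 := by
    rw [hPdef]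
    refine le_trans (natDegree_add_le _ _) (max_le ?_ ?_)
    · refine le_trans (natDegree_mul_le) ?_
      have h1 : (C (σ ^ 2 / 2) * X ^ 2 - C δ * X - C (lam + q) : ℝ[X]).natDegree ≤ 2 := by
        refine le_trans (natDegree_sub_le _ _) (max_le (le_trans (natDegree_sub_le _ _)
          (max_le ?_ ?_)) ?_)
        · exact le_trans (natDegree_C_mul_le _ _) (by simp)
        · exact le_trans (natDegree_C_mul_le _ _) (by simp)
        · simp
      have h2 : (∏ j ∈ Finset.range n, (X + C (α j)) : ℝ[X]).natDegree ≤ n := by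
        refine le_trans (natDegree_prod_le _ _) ?_
        refine le_trans (Finset.sum_le_card_nsmul _ _ 1 ?_) (by simp)
        intro j _
        exact le_of_eq (natDegree_X_add_C _)
      omega
    · refine natDegree_sum_le_of_forall_le _ _ ?_
      intro i _
      refine le_trans (natDegree_C_mul_le _ _) ?_
      refine le_trans (natDegree_prod_le _ _) ?_
      refine le_trans (Finset.sum_le_card_nsmul _ _ 1
        (fun j _ => le_of_eq (natDegree_X_add_C _))) ?_
      simp only [smul_eq_mul, mul_one]
      have hcard := Finset.card_le_card (Finset.erase_subset i (Finset.range n))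
      simp only [Finset.card_range] at hcard
      omega
  -- root counting
  have hcount : ∀ S : Finset ℝ, (∀ x ∈ S, P.eval x = 0) → S.card ≤ n + 2 := by
    intro S hS
    refine le_trans (Polynomial.card_le_degree_of_subset_roots ?_) hdeg
    intro x hx
    rw [Polynomial.mem_roots hPne]
    exact hS x hx
  have hcont : Continuous fun y : ℝ => P.eval y := P.continuous
  -- value at 0
  have hQ0 : 0 < ∏ j ∈ Finset.range n, ((0:ℝ) + α j) := by
    apply Finset.prod_pos
    intro j hj
    have := hαpos j (Finset.mem_range.mp hj)
    linarith
  have hh0 : h 0 = -q := by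
    rw [hdef]
    have hsum : ∑ i ∈ Finset.range n, lam * p i * α i / ((0:ℝ) + α i) =
        ∑ i ∈ Finset.range n, lam * p i := by
      refine Finset.sum_congr rfl fun i hi => ?_
      have hαi := hαpos i (Finset.mem_range.mp hi)
      field_simp
      ring
    rw [hsum, ← Finset.mul_sum, hpsum]
    ring
  have hP0 : P.eval 0 < 0 := by
    have h0ne : ∀ j < n, (0:ℝ) + α j ≠ 0 := fun j hj => by
      have := hαpos j hj; linarith
    rw [hPh 0 h0ne, hh0]
    exact mul_neg_of_neg_of_pos (by linarith) hQ0
  -- positive root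
  have hexpos : ∃ x ∈ Set.Ioi (0:ℝ), P.eval x = 0 := by
    set M : ℝ := max 1 ((|δ| + lam + q + 1) * 2 / σ ^ 2) with hM
    have hM1 : (1:ℝ) ≤ M := le_max_left _ _
    have hM0 : (0:ℝ) < M := lt_of_lt_of_le one_pos hM1
    have hM2 : (|δ| + lam + q + 1) * 2 / σ ^ 2 ≤ M := le_max_right _ _
    have hσ2 : (0:ℝ) < σ ^ 2 := by positivity
    have hM2' : (|δ| + lam + q + 1) * 2 ≤ M * σ ^ 2 := by
      rw [div_le_iff₀ hσ2] at hM2; linarith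
    have hhM : 0 < h M := by
      rw [hdef]
      have hsum : 0 ≤ ∑ i ∈ Finset.range n, lam * p i * α i / (M + α i) := by
        apply Finset.sum_nonneg
        intro i hi
        have hi' := Finset.mem_range.mp hi
        have := hp i hi'
        have := hαpos i hi'
        positivity
      have habs := le_abs_self δ
      nlinarith [mul_le_mul_of_nonneg_left hM2' (le_of_lt hM0)]
    have hQM : 0 < ∏ j ∈ Finset.range n, (M + α j) := by
      apply Finset.prod_pos
      intro j hj
      have := hαpos j (Finset.mem_range.mp hj)
      linarith
    have hPM : 0 < P.eval M := by
      rw [hPh M (fun j hj => by have := hαpos j hj; linarith)]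
      exact mul_pos hhM hQM
    obtain ⟨x, hx, hx0⟩ := ivt_sign' hcont hM0 (mul_neg_of_neg_of_pos hP0 hPM)
    exact ⟨x, hx.1, hx0⟩
  -- root in (-(α 0), 0)
  have hP0' : 0 < P.eval (-(α 0)) := by
    have := hsign 0 hn
    simpa using this
  have hα00 : -(α 0) < 0 := by have := hαpos 0 hn; linarith
  have hexfirst : ∃ x ∈ Set.Ioo (-(α 0)) (0:ℝ), P.eval x = 0 :=
    ivt_sign' hcont hα00 (mul_neg_of_pos_of_neg hP0' hP0)
  -- roots in middle intervals : 1 ≤ k < n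
  have hexmid : ∀ k, 1 ≤ k → k < n →
      ∃ x ∈ Set.Ioo (-(α k)) (-(α (k-1))), P.eval x = 0 := by
    intro k hk1 hkn
    obtain ⟨m, rfl⟩ : ∃ m, k = m + 1 := ⟨k - 1, by omega⟩
    simp only [Nat.add_sub_cancel]
    have hab : -(α (m+1)) < -(α m) := by
      have := hαmono m (m+1) (by omega) hkn
      linarith
    have hA := hsign m (by omega)
    have hB := hsign (m+1) hkn
    have hpow : (-1:ℝ) ^ (m+1) = -((-1:ℝ) ^ m) := by
      rw [pow_succ]; ring
    have hsq := neg_one_pow_sq' m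
    have hprod : P.eval (-(α (m+1))) * P.eval (-(α m)) < 0 := by
      rw [hpow] at hB
      nlinarith [mul_pos hA hB]
    exact ivt_sign' hcont hab hprod
  -- root below -(α (n-1))
  have hexlast : ∃ x ∈ Set.Iio (-(α (n-1))), P.eval x = 0 := by
    set M : ℝ := max (2 * α (n-1)) (max 1 ((|δ| + 2*lam + q + 1) * 2 / σ ^ 2)) with hM
    have hMα : 2 * α (n-1) ≤ M := le_max_left _ _
    have hM1 : (1:ℝ) ≤ M := le_trans (le_max_left _ _) (le_max_right _ _)
    have hM0 : (0:ℝ) < M := lt_of_lt_of_le one_pos hM1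
    have hM2 : (|δ| + 2*lam + q + 1) * 2 / σ ^ 2 ≤ M :=
      le_trans (le_max_right _ _) (le_max_right _ _)
    have hσ2 : (0:ℝ) < σ ^ 2 := by positivity
    have hM2' : (|δ| + 2*lam + q + 1) * 2 ≤ M * σ ^ 2 := by
      rw [div_le_iff₀ hσ2] at hM2; linarith
    have hn1 : n - 1 < n := by omega
    have hαn1 : 0 < α (n-1) := hαpos _ hn1
    have hMα' : ∀ j < n, α j < M := by
      intro j hj
      have h1 : α j ≤ α (n-1) := hαmono' j (n-1) (by omega) hn1
      linarith
    -- each summand bounded below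
    have hsum : -lam ≤ ∑ i ∈ Finset.range n, lam * p i * α i / (-M + α i) := by
      have hstep : ∀ i ∈ Finset.range n,
          -(lam * p i) ≤ lam * p i * α i / (-M + α i) := by
        intro i hi
        have hi' := Finset.mem_range.mp hi
        have hpi := hp i hi'
        have hαi := hαpos i hi'
        have hαile : α i ≤ α (n-1) := hαmono' i (n-1) (by omega) hn1
        have hden : 0 < M - α i := by linarith [hMα' i hi']
        have heq : lam * p i * α i / (-M + α i) = -(lam * p i * α i / (M - α i)) := by
          rw [← div_neg]
          ring_nf
        rw [heq, neg_le_neg_iff]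
        rw [div_le_iff₀ hden]
        have h2 : 0 ≤ M - 2 * α i := by linarith
        nlinarith [mul_nonneg (mul_pos hlam hpi).le h2]
      have hsum0 : ∑ i ∈ Finset.range n, -(lam * p i) = -lam := by
        have hc : ∀ i ∈ Finset.range n, -(lam * p i) = (-lam) * p i := fun i _ => by ring
        rw [Finset.sum_congr rfl hc, ← Finset.mul_sum, hpsum, mul_one]
      calc -lam = ∑ i ∈ Finset.range n, -(lam * p i) := hsum0.symm
        _ ≤ _ := Finset.sum_le_sum hstep
    have hhM : 0 < h (-M) := by
      rw [hdef]
      have habs := neg_abs_le δ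
      nlinarith [mul_le_mul_of_nonneg_left hM2' (le_of_lt hM0)]
    have hQM : 0 < (-1:ℝ) ^ n * ∏ j ∈ Finset.range n, (-M + α j) := by
      have := prod_neg_sign' (s := Finset.range n) (f := fun j => -M + α j)
        (fun j hj => by
          have := hMα' j (Finset.mem_range.mp hj)
          show -M + α j < 0
          linarith)
      simpa using this
    have hPM : 0 < (-1:ℝ) ^ n * P.eval (-M) := by
      rw [hPh (-M) (fun j hj => by have := hMα' j hj; intro hc; linarith)]
      calc (0:ℝ) < h (-M) * ((-1:ℝ) ^ n * ∏ j ∈ Finset.range n, (-M + α j)) :=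
            mul_pos hhM hQM
        _ = (-1:ℝ) ^ n * (h (-M) * ∏ j ∈ Finset.range n, (-M + α j)) := by ring
    have hA := hsign (n-1) hn1
    have hpow : (-1:ℝ) ^ n = -((-1:ℝ) ^ (n-1)) := by
      conv_lhs => rw [show n = (n-1) + 1 by omega]
      rw [pow_succ]; ring
    have hsq := neg_one_pow_sq' (n-1)
    have hab : -M < -(α (n-1)) := by linarith
    have hprod : P.eval (-M) * P.eval (-(α (n-1))) < 0 := by
      rw [hpow] at hPM
      nlinarith [mul_pos hPM hA]
    obtain ⟨x, hx, hx0⟩ := ivt_sign' hcont hab hprod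
    exact ⟨x, hx.2, hx0⟩
  -- choose the family of negative roots
  have hex : ∀ k : ℕ, ∃ x : ℝ, k ≤ n → (P.eval x = 0 ∧
      (k = 0 → x ∈ Set.Ioo (-(α 0)) (0:ℝ)) ∧
      (1 ≤ k → k < n → x ∈ Set.Ioo (-(α k)) (-(α (k-1)))) ∧
      (k = n → x ∈ Set.Iio (-(α (n-1))))) := by
    intro k
    by_cases hk : k ≤ n
    · rcases Nat.lt_or_ge k n with hkn | hkn
      · rcases Nat.eq_zero_or_pos k with rfl | hk1
        · obtain ⟨x, hx, hx0⟩ := hexfirst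
          exact ⟨x, fun _ => ⟨hx0, fun _ => hx, fun h1 _ => absurd h1 (by omega),
            fun hk0 => absurd hk0 (by omega)⟩⟩
        · obtain ⟨x, hx, hx0⟩ := hexmid k hk1 hkn
          exact ⟨x, fun _ => ⟨hx0, fun hk0 => absurd hk0 (by omega),
            fun _ _ => hx, fun hk0 => absurd hk0 (by omega)⟩⟩
      · have hkeq : k = n := le_antisymm hk hkn
        obtain ⟨x, hx, hx0⟩ := hexlast
        refine ⟨x, fun _ => ⟨hx0, fun hk0 => absurd hk0 (by omega),
          fun h1 h2 => absurd h2 (by omega), fun _ => hx⟩⟩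
    · exact ⟨0, fun hc => absurd hc hk⟩
  choose t ht using hex
  have htroot : ∀ k ≤ n, P.eval (t k) = 0 := fun k hk => (ht k hk).1
  have ht0 : t 0 ∈ Set.Ioo (-(α 0)) (0:ℝ) := (ht 0 (by omega)).2.1 rfl
  have htmid : ∀ k, 1 ≤ k → k < n → t k ∈ Set.Ioo (-(α k)) (-(α (k-1))) :=
    fun k h1 h2 => (ht k h2.le).2.2.1 h1 h2
  have htn : t n ∈ Set.Iio (-(α (n-1))) := (ht n le_rfl).2.2.2 rfl
  have hub : ∀ k < n, -(α k) < t k := by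
    intro k hk
    rcases Nat.eq_zero_or_pos k with rfl | hk1
    · exact ht0.1
    · exact (htmid k hk1 hk).1
  have hlb : ∀ k, 1 ≤ k → k ≤ n → t k < -(α (k-1)) := by
    intro k h1 h2
    rcases Nat.lt_or_ge k n with hkn | hkn
    · exact (htmid k h1 hkn).2
    · have : k = n := le_antisymm h2 hkn
      rw [this]; exact htn
  have htneg : ∀ k ≤ n, t k < 0 := by
    intro k hk
    rcases Nat.eq_zero_or_pos k with rfl | hk1
    · exact ht0.2
    · have h1 := hlb k hk1 hk
      have h2 := hαpos (k-1) (by omega)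
      linarith
  have horder : ∀ k m : ℕ, k < m → m ≤ n → t m < t k := by
    intro k m hkm hmn
    have h1 : t m < -(α (m-1)) := hlb m (by omega) hmn
    have h2 : α k ≤ α (m-1) := hαmono' k (m-1) (by omega) (by omega)
    have h3 : -(α k) < t k := hub k (by omega)
    linarith
  -- the positive root
  obtain ⟨tpos, htpos, htposroot⟩ := hexpos
  have htpos' : (0:ℝ) < tpos := htpos
  -- the finset of all roots
  set B : Finset ℝ := insert tpos ((Finset.range (n+1)).image t) with hB
  have hcardB : B.card = n + 2 := by
    rw [hB, Finset.card_insert_of_notMem, Finset.card_image_of_injOn,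
      Finset.card_range]
    · intro a ha b hb hab
      simp only [Finset.coe_range, Set.mem_Iio] at ha hb
      rcases lt_trichotomy a b with hc | hc | hc
      · exact absurd hab (ne_of_gt (horder a b hc (by omega)))
      · exact hc
      · exact absurd hab (ne_of_lt (horder b a hc (by omega)))
    · intro hc
      obtain ⟨k, hk, hkt⟩ := Finset.mem_image.mp hc
      have := htneg k (by simpa using Nat.lt_succ_iff.mp (Finset.mem_range.mp hk))
      rw [hkt] at this
      linarith
  have hBroot : ∀ x ∈ B, P.eval x = 0 := by
    intro x hx
    rcases Finset.mem_insert.mp hx with rfl | hx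
    · exact htposroot
    · obtain ⟨k, hk, rfl⟩ := Finset.mem_image.mp hx
      exact htroot k (Nat.lt_succ_iff.mp (Finset.mem_range.mp hk))
  have hmemB : ∀ x : ℝ, P.eval x = 0 → x ∈ B := by
    intro x hx
    by_contra hxB
    have hcard := hcount (insert x B) (by
      intro y hy
      rcases Finset.mem_insert.mp hy with rfl | hy
      · exact hx
      · exact hBroot y hy)
    rw [Finset.card_insert_of_notMem hxB, hcardB] at hcard
    omega
  -- membership in B as t-values
  have hmemB' : ∀ x : ℝ, P.eval x = 0 → x = tpos ∨ ∃ k ≤ n, x = t k := by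
    intro x hx
    rcases Finset.mem_insert.mp (hmemB x hx) with rfl | hx'
    · exact Or.inl rfl
    · obtain ⟨k, hk, rfl⟩ := Finset.mem_image.mp hx'
      exact Or.inr ⟨k, Nat.lt_succ_iff.mp (Finset.mem_range.mp hk), rfl⟩
  -- conversion between h-roots and P-roots
  have hconv : ∀ y : ℝ, (∀ j < n, y ≠ -(α j)) → (h y = 0 ↔ P.eval y = 0) := by
    intro y hy
    have hyne : ∀ j < n, y + α j ≠ 0 := by
      intro j hj hc
      exact hy j hj (by linarith)
    rw [hPh y hyne]
    constructor
    · intro h0; rw [h0, zero_mul]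
    · intro h0
      have hQ : ∏ j ∈ Finset.range n, (y + α j) ≠ 0 :=
        Finset.prod_ne_zero_iff.mpr fun j hj => hyne j (Finset.mem_range.mp hj)
      exact (mul_eq_zero.mp h0).resolve_right hQ
  have hα0le : ∀ j < n, α 0 ≤ α j := fun j hj => hαmono' 0 j (by omega) hj
  have hαlen1 : ∀ j < n, α j ≤ α (n-1) := fun j hj => hαmono' j (n-1) (by omega) (by omega)
  refine ⟨?_, ?_, ?_, ?_, ?_⟩
  · -- unique root in (0, ∞)
    have hne : ∀ j < n, tpos ≠ -(α j) := by
      intro j hj hc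
      have := hαpos j hj
      rw [hc] at htpos'
      linarith
    refine ⟨tpos, ⟨htpos, (hconv tpos hne).mpr htposroot⟩, ?_⟩
    rintro y ⟨hy, hy0⟩
    have hy' : (0:ℝ) < y := hy
    have hyne : ∀ j < n, y ≠ -(α j) := by
      intro j hj hc
      have := hαpos j hj
      rw [hc] at hy'
      linarith
    rcases hmemB' y ((hconv y hyne).mp hy0) with rfl | ⟨k, hk, rfl⟩
    · rfl
    · have := htneg k hk
      linarith
  · -- unique root in (-(α 0), 0)
    have hne : ∀ j < n, t 0 ≠ -(α j) := by
      intro j hj hc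
      have h1 := hα0le j hj
      have h2 := ht0.1
      rw [hc] at h2
      linarith
    refine ⟨t 0, ⟨ht0, (hconv (t 0) hne).mpr (htroot 0 (by omega))⟩, ?_⟩
    rintro y ⟨hy, hy0⟩
    have hy1 : -(α 0) < y := hy.1
    have hy2 : y < 0 := hy.2
    have hyne : ∀ j < n, y ≠ -(α j) := by
      intro j hj hc
      have h1 := hα0le j hj
      rw [hc] at hy1
      linarith
    rcases hmemB' y ((hconv y hyne).mp hy0) with rfl | ⟨k, hk, rfl⟩
    · linarith
    · rcases Nat.eq_zero_or_pos k with rfl | hk1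
      · rfl
      · have h1 := hlb k hk1 hk
        have h2 := hα0le (k-1) (by omega)
        linarith
  · -- unique root in each (-(α (i+1)), -(α i))
    intro i hi
    have hti := htmid (i+1) (by omega) hi
    rw [Nat.add_sub_cancel] at hti
    have hne : ∀ y : ℝ, y ∈ Set.Ioo (-(α (i+1))) (-(α i)) → ∀ j < n, y ≠ -(α j) := by
      intro y hy j hj hc
      rcases Nat.lt_or_ge j (i+1) with hji | hji
      · have h1 : α j ≤ α i := hαmono' j i (by omega) (by omega)
        have h2 := hy.2
        rw [hc] at h2
        linarith
      · have h1 : α (i+1) ≤ α j := hαmono' (i+1) j hji hj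
        have h2 := hy.1
        rw [hc] at h2
        linarith
    refine ⟨t (i+1), ⟨hti, (hconv _ (hne _ hti)).mpr (htroot (i+1) (by omega))⟩, ?_⟩
    rintro y ⟨hy, hy0⟩
    have hy1 : -(α (i+1)) < y := hy.1
    have hy2 : y < -(α i) := hy.2
    have hαi := hαpos i (by omega)
    rcases hmemB' y ((hconv y (hne y hy)).mp hy0) with rfl | ⟨k, hk, rfl⟩
    · linarith
    · rcases Nat.lt_or_ge k (i+1) with hki | hki
      · have h1 := hub k (by omega)
        have h2 : α k ≤ α i := hαmono' k i (by omega) (by omega)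
        linarith
      · rcases Nat.lt_or_ge k (i+2) with hki2 | hki2
        · have : k = i + 1 := by omega
          rw [this]
        · have h1 := hlb k (by omega) hk
          have h2 : α (i+1) ≤ α (k-1) := hαmono' (i+1) (k-1) (by omega) (by omega)
          linarith
  · -- unique root in (-∞, -(α (n-1)))
    have hne : ∀ y : ℝ, y ∈ Set.Iio (-(α (n-1))) → ∀ j < n, y ≠ -(α j) := by
      intro y hy j hj hc
      have h1 := hαlen1 j hj
      have h2 : y < -(α (n-1)) := hy
      rw [hc] at h2
      linarith
    refine ⟨t n, ⟨htn, (hconv _ (hne _ htn)).mpr (htroot n le_rfl)⟩, ?_⟩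
    rintro y ⟨hy, hy0⟩
    have hy1 : y < -(α (n-1)) := hy
    have hαn1 := hαpos (n-1) (by omega)
    rcases hmemB' y ((hconv y (hne y hy)).mp hy0) with rfl | ⟨k, hk, rfl⟩
    · linarith
    · rcases Nat.lt_or_ge k n with hkn | hkn
      · have h1 := hub k hkn
        have h2 : α k ≤ α (n-1) := hαmono' k (n-1) (by omega) (by omega)
        linarith
      · have : k = n := le_antisymm hk hkn
        rw [this]
  · -- every root lies in one of the intervals
    intro y hyne hy0
    rcases hmemB' y ((hconv y hyne).mp hy0) with rfl | ⟨k, hk, rfl⟩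
    · exact Or.inl htpos
    · rcases Nat.eq_zero_or_pos k with rfl | hk1
      · exact Or.inr (Or.inl ht0)
      · rcases Nat.lt_or_ge k n with hkn | hkn
        · refine Or.inr (Or.inr (Or.inl ⟨k - 1, by omega, ?_⟩))
          have hkk : k - 1 + 1 = k := by omega
          rw [hkk]
          exact htmid k hk1 hkn
        · have : k = n := le_antisymm hk hkn
          rw [this]
          exact Or.inr (Or.inr (Or.inr htn))
end
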